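/- Let X be a positive semidefinite operator on (ℂ^k)^⊗N satisfying X = Π_S X Π_S, where Π_S is the projector onto the permutationally symmetric subspace, and assume N ≥ 3. Then the maximum of ⟨φ|X|φ⟩ over all product states |φ⟩ = |a₁⟩⊗…⊗|a_N⟩ of unit vectors equals the maximum over symmetric product states |a⟩^⊗N. -/

import Mathlib

open scoped BigOperators

/-- The permutationally symmetric subspace of (ℂ^k)^⊗N, in the product-basis
coefficient representation with the Euclidean (Hilbert–Schmidt) inner product. -/
noncomputable def symmSubspace (N k : ℕ) :
    Submodule ℂ (EuclideanSpace ℂ (Fin N → Fin k)) where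
  carrier := {ψ | ∀ (σ : Equiv.Perm (Fin N)) (s : Fin N → Fin k), ψ (s ∘ σ) = ψ s}
  add_mem' := by intro a b ha hb σ s; simp [ha σ s, hb σ s]
  zero_mem' := by intro σ s; rfl
  smul_mem' := by intro c a ha σ s; simp [ha σ s]

/-- The product state |a₁⟩⊗…⊗|a_N⟩ in the coefficient representation. -/
noncomputable def productVec {N k : ℕ} (a : Fin N → Fin k → ℂ) :
    EuclideanSpace ℂ (Fin N → Fin k) :=
  (WithLp.equiv 2 _).symm (fun s => ∏ i, a i (s i))

open Finset

lemma productVec_apply {N k : ℕ} (a : Fin N → Fin k → ℂ) (s : Fin N → Fin k) :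
    productVec a s = ∏ i, a i (s i) := rfl

lemma inner_euc {N k : ℕ} (φ ψ : EuclideanSpace ℂ (Fin N → Fin k)) :
    (inner ℂ φ ψ : ℂ) = ∑ s, (starRingEnd ℂ) (φ s) * ψ s := by
  simp [PiLp.inner_apply, RCLike.inner_apply, mul_comm]

lemma prod_two {N k : ℕ} {i j : Fin N} (hij : i ≠ j) (b : Fin N → Fin k → ℂ)
    (s : Fin N → Fin k) :
    ∏ l, b l (s l)
      = b i (s i) * b j (s j) * ∏ l ∈ (univ.erase i).erase j, b l (s l) := by
  have h1 : ∏ l, b l (s l) = b i (s i) * ∏ l ∈ univ.erase i, b l (s l) :=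
    (Finset.mul_prod_erase _ _ (mem_univ i)).symm
  have h2 : ∏ l ∈ univ.erase i, b l (s l)
      = b j (s j) * ∏ l ∈ (univ.erase i).erase j, b l (s l) :=
    (Finset.mul_prod_erase _ _ (by simp [hij.symm] : j ∈ univ.erase i)).symm
  rw [h1, h2, mul_assoc]

lemma update2_apply {N k : ℕ} {i j : Fin N} (hij : i ≠ j) (a : Fin N → Fin k → ℂ)
    (u v : Fin k → ℂ) {l : Fin N} (hli : l ≠ i) (hlj : l ≠ j) :
    Function.update (Function.update a i u) j v l = a l := by
  rw [Function.update_of_ne hlj, Function.update_of_ne hli]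

lemma pv_update2 {N k : ℕ} {i j : Fin N} (hij : i ≠ j) (a : Fin N → Fin k → ℂ)
    (u v : Fin k → ℂ) (s : Fin N → Fin k) :
    productVec (Function.update (Function.update a i u) j v) s
      = u (s i) * v (s j) * ∏ l ∈ (univ.erase i).erase j, a l (s l) := by
  rw [productVec_apply, prod_two hij]
  rw [Function.update_of_ne hij, Function.update_self, Function.update_self]
  congr 1
  refine Finset.prod_congr rfl fun l hl => ?_
  simp only [mem_erase] at hl
  exact congrFun (update2_apply hij a u v hl.2.1 hl.1) (s l)

noncomputable def permE {N k : ℕ} (σ : Equiv.Perm (Fin N))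
    (ψ : EuclideanSpace ℂ (Fin N → Fin k)) : EuclideanSpace ℂ (Fin N → Fin k) :=
  (WithLp.equiv 2 _).symm (fun s => ψ (s ∘ σ))

lemma permE_apply {N k : ℕ} (σ : Equiv.Perm (Fin N))
    (ψ : EuclideanSpace ℂ (Fin N → Fin k)) (s : Fin N → Fin k) :
    permE σ ψ s = ψ (s ∘ σ) := rfl

lemma mem_symmSubspace_iff {N k : ℕ} (ψ : EuclideanSpace ℂ (Fin N → Fin k)) :
    ψ ∈ symmSubspace N k ↔
      ∀ (σ : Equiv.Perm (Fin N)) (s : Fin N → Fin k), ψ (s ∘ σ) = ψ s :=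
  Iff.rfl

lemma inner_permE_left {N k : ℕ} (σ : Equiv.Perm (Fin N))
    (ψ w : EuclideanSpace ℂ (Fin N → Fin k)) (hw : w ∈ symmSubspace N k) :
    (inner ℂ (permE σ ψ) w : ℂ) = inner ℂ ψ w := by
  rw [inner_euc, inner_euc]
  have e : ((Fin N → Fin k) ≃ (Fin N → Fin k)) :=
    Equiv.arrowCongr σ.symm (Equiv.refl (Fin k))
  rw [← Equiv.sum_comp (Equiv.arrowCongr σ.symm (Equiv.refl (Fin k)))
    (fun s => (starRingEnd ℂ) (ψ s) * w s)]
  refine Finset.sum_congr rfl fun s _ => ?_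
  have hes : (Equiv.arrowCongr σ.symm (Equiv.refl (Fin k))) s = s ∘ σ := by
    funext m; simp [Equiv.arrowCongr]
  rw [hes, permE_apply, (mem_symmSubspace_iff w).mp hw σ s]

lemma proj_permE {N k : ℕ} (σ : Equiv.Perm (Fin N))
    (ψ : EuclideanSpace ℂ (Fin N → Fin k)) :
    (((symmSubspace N k).orthogonalProjectionOnto (permE σ ψ)) :
        EuclideanSpace ℂ (Fin N → Fin k))
      = (symmSubspace N k).orthogonalProjectionOnto ψ := by
  refine Submodule.eq_starProjection_of_mem_of_inner_eq_zero (by simp) fun w hw => ?_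
  rw [inner_sub_left, inner_permE_left σ ψ w hw]
  rw [← inner_sub_left]
  exact Submodule.starProjection_inner_eq_zero ψ w hw

section XLemmas
variable {N k : ℕ} (X : EuclideanSpace ℂ (Fin N → Fin k) →L[ℂ] EuclideanSpace ℂ (Fin N → Fin k))
variable {X}

lemma X_apply_eq (hXS : X = ((symmSubspace N k).subtypeL.comp
          ((symmSubspace N k).orthogonalProjectionOnto)).comp
        (X.comp ((symmSubspace N k).subtypeL.comp
          ((symmSubspace N k).orthogonalProjectionOnto)))) (χ : EuclideanSpace ℂ (Fin N → Fin k)) :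
    X χ = (((symmSubspace N k).orthogonalProjectionOnto
      (X (((symmSubspace N k).orthogonalProjectionOnto χ) :
        EuclideanSpace ℂ (Fin N → Fin k)))) : EuclideanSpace ℂ (Fin N → Fin k)) := by
  conv_lhs => rw [hXS]
  rfl

lemma X_permE (hXS : X = ((symmSubspace N k).subtypeL.comp
          ((symmSubspace N k).orthogonalProjectionOnto)).comp
        (X.comp ((symmSubspace N k).subtypeL.comp
          ((symmSubspace N k).orthogonalProjectionOnto)))) (σ : Equiv.Perm (Fin N)) (ψ : EuclideanSpace ℂ (Fin N → Fin k)) :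
    X (permE σ ψ) = X ψ := by
  rw [X_apply_eq hXS (permE σ ψ), X_apply_eq hXS ψ, proj_permE]

lemma inner_permE_X (hXS : X = ((symmSubspace N k).subtypeL.comp
          ((symmSubspace N k).orthogonalProjectionOnto)).comp
        (X.comp ((symmSubspace N k).subtypeL.comp
          ((symmSubspace N k).orthogonalProjectionOnto)))) (σ : Equiv.Perm (Fin N)) (ψ χ : EuclideanSpace ℂ (Fin N → Fin k)) :
    (inner ℂ (permE σ ψ) (X χ) : ℂ) = inner ℂ ψ (X χ) := by
  rw [X_apply_eq hXS χ]
  have e := fun u v => (symmSubspace N k).inner_starProjection_left_eq_right u v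
  simp only [Submodule.starProjection_apply] at e
  rw [← e, proj_permE, e]

end XLemmas

lemma abs_sq_parallelogram (z w : ℂ) :
    ‖z + w‖ ^ 2 + ‖z - w‖ ^ 2
      = 2 * ‖z‖ ^ 2 + 2 * ‖w‖ ^ 2 := by
  simp only [Complex.sq_norm, Complex.normSq_apply, Complex.add_re, Complex.add_im,
    Complex.sub_re, Complex.sub_im]
  ring

lemma normSq_parallelogram (z w : ℂ) :
    Complex.normSq (z + w) + Complex.normSq (z - w)
      = 2 * Complex.normSq z + 2 * Complex.normSq w := by
  simp only [Complex.normSq_apply, Complex.add_re, Complex.add_im,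
    Complex.sub_re, Complex.sub_im]
  ring

noncomputable def ipC {k : ℕ} (b c : Fin k → ℂ) : ℂ := ∑ m, (starRingEnd ℂ) (b m) * c m

noncomputable def Gpot {N k : ℕ} (a : Fin N → Fin k → ℂ) : ℝ :=
  ∑ i, ∑ j, Complex.normSq (ipC (a i) (a j))

lemma normSq_ipC_symm {k : ℕ} (b c : Fin k → ℂ) :
    Complex.normSq (ipC b c) = Complex.normSq (ipC c b) := by
  have : ipC c b = (starRingEnd ℂ) (ipC b c) := by
    rw [ipC, ipC, map_sum]
    exact Finset.sum_congr rfl fun m _ => by rw [map_mul, Complex.conj_conj]; ring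
  rw [this, Complex.normSq_conj]

lemma ipC_self {k : ℕ} {b : Fin k → ℂ} (hb : ∑ m, ‖b m‖ ^ 2 = 1) :
    ipC b b = 1 := by
  have h : ∀ z : ℂ, (starRingEnd ℂ) z * z = ((‖z‖ ^ 2 : ℝ) : ℂ) := fun z => by
    rw [mul_comm, Complex.mul_conj, Complex.normSq_eq_norm_sq]
  rw [ipC]
  calc ∑ m, (starRingEnd ℂ) (b m) * b m = ∑ m, ((‖b m‖ ^ 2 : ℝ) : ℂ) :=
        Finset.sum_congr rfl fun m _ => h (b m)
    _ = ((∑ m, ‖b m‖ ^ 2 : ℝ) : ℂ) := by push_cast; rfl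
    _ = 1 := by rw [hb]; norm_num

lemma ipC_add_right {k : ℕ} (b x y : Fin k → ℂ) :
    ipC b (fun m => x m + y m) = ipC b x + ipC b y := by
  rw [ipC, ipC, ipC, ← Finset.sum_add_distrib]
  exact Finset.sum_congr rfl fun m _ => by ring

lemma ipC_smul_right {k : ℕ} (c : ℂ) (b x : Fin k → ℂ) :
    ipC b (fun m => c * x m) = c * ipC b x := by
  rw [ipC, ipC, Finset.mul_sum]
  exact Finset.sum_congr rfl fun m _ => by ring

noncomputable def nP {k : ℕ} (x y : Fin k → ℂ) : ℝ := ∑ m, ‖x m + y m‖ ^ 2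

noncomputable def uP {k : ℕ} (x y : Fin k → ℂ) : Fin k → ℂ :=
  fun m => ((Real.sqrt (nP x y) : ℝ) : ℂ)⁻¹ * (x m + y m)

lemma nP_nonneg {k : ℕ} (x y : Fin k → ℂ) : 0 ≤ nP x y :=
  Finset.sum_nonneg fun m _ => sq_nonneg _

lemma uP_unit {k : ℕ} {x y : Fin k → ℂ} (h : nP x y ≠ 0) :
    ∑ m, ‖uP x y m‖ ^ 2 = 1 := by
  have h0 : 0 < nP x y := lt_of_le_of_ne (nP_nonneg x y) (Ne.symm h)
  have hs : Real.sqrt (nP x y) > 0 := Real.sqrt_pos.mpr h0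
  have habs : ∀ m, ‖uP x y m‖ ^ 2
      = (nP x y)⁻¹ * ‖x m + y m‖ ^ 2 := by
    intro m
    rw [uP, norm_mul, norm_inv, Complex.norm_real, Real.norm_of_nonneg hs.le, mul_pow, inv_pow,
      Real.sq_sqrt h0.le]
  rw [Finset.sum_congr rfl fun m _ => habs m, ← Finset.mul_sum]
  rw [show (∑ m, ‖x m + y m‖ ^ 2) = nP x y from rfl]
  field_simp

lemma uP_normSq_ipC {k : ℕ} {x y : Fin k → ℂ} (h : nP x y ≠ 0) (b : Fin k → ℂ) :
    Complex.normSq (ipC b (uP x y)) = (nP x y)⁻¹ * Complex.normSq (ipC b x + ipC b y) := by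
  have h0 : 0 < nP x y := lt_of_le_of_ne (nP_nonneg x y) (Ne.symm h)
  have hs : Real.sqrt (nP x y) > 0 := Real.sqrt_pos.mpr h0
  have : ipC b (uP x y) = ((Real.sqrt (nP x y) : ℝ) : ℂ)⁻¹ * (ipC b x + ipC b y) := by
    have e : uP x y = fun m => ((Real.sqrt (nP x y) : ℝ) : ℂ)⁻¹ * (x m + y m) := rfl
    rw [e, ipC_smul_right _ b (fun m => x m + y m), ipC_add_right]
  rw [this, map_mul, map_inv₀, Complex.normSq_ofReal, Real.mul_self_sqrt h0.le]

lemma ipC_neg_right {k : ℕ} (b y : Fin k → ℂ) :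
    ipC b (fun m => -(y m)) = - ipC b y := by
  rw [ipC, ipC, ← Finset.sum_neg_distrib]
  exact Finset.sum_congr rfl fun m _ => by ring

lemma nP_add_nP {k : ℕ} {x y : Fin k → ℂ} (hx : ∑ m, ‖x m‖ ^ 2 = 1)
    (hy : ∑ m, ‖y m‖ ^ 2 = 1) :
    nP x y + nP x (fun m => -(y m)) = 4 := by
  have h : ∀ m, ‖x m + y m‖ ^ 2 + ‖x m + -(y m)‖ ^ 2
      = 2 * ‖x m‖ ^ 2 + 2 * ‖y m‖ ^ 2 := by
    intro m
    have := abs_sq_parallelogram (x m) (y m)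
    rw [sub_eq_add_neg] at this
    exact this
  rw [nP, nP, ← Finset.sum_add_distrib, Finset.sum_congr rfl fun m _ => h m,
    Finset.sum_add_distrib, ← Finset.mul_sum, ← Finset.mul_sum, hx, hy]
  norm_num

lemma csPos {E : Type*} [NormedAddCommGroup E] [InnerProductSpace ℂ E] [CompleteSpace E]
    (X : E →L[ℂ] E) (hpos : X.IsPositive) (u v : E) :
    ‖(inner ℂ u (X v) : ℂ)‖ ^ 2 ≤ (inner ℂ u (X u) : ℂ).re * (inner ℂ v (X v) : ℂ).re := by
  have hsym : ∀ w₁ w₂ : E, (inner ℂ (X w₁) w₂ : ℂ) = inner ℂ w₁ (X w₂) :=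
    hpos.inner_left_eq_inner_right
  have hnn : ∀ w : E, 0 ≤ (inner ℂ w (X w) : ℂ).re := fun w => hpos.re_inner_nonneg_right w
  set b : ℂ := inner ℂ u (X v) with hb
  by_cases hb0 : b = 0
  · rw [hb0]
    simpa using mul_nonneg (hnn u) (hnn v)
  · set c : ℂ := (starRingEnd ℂ) b / (‖b‖) with hc
    have habs : (‖b‖ : ℂ) ≠ 0 := by simpa using hb0
    have hcb : c * b = ‖b‖ := by
      rw [hc, div_mul_eq_mul_div, mul_comm ((starRingEnd ℂ) b) b, Complex.mul_conj,
        Complex.normSq_eq_norm_sq]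
      field_simp
      push_cast; ring
    have hcb' : (starRingEnd ℂ) c * (starRingEnd ℂ) b = ‖b‖ := by
      rw [← map_mul, hcb, Complex.conj_ofReal]
    have hcc : (starRingEnd ℂ) c * c = 1 := by
      rw [hc, map_div₀, Complex.conj_conj, Complex.conj_ofReal, div_mul_div_comm,
        Complex.mul_conj, Complex.normSq_eq_norm_sq]
      field_simp
      push_cast; ring
    have hvu : (inner ℂ v (X u) : ℂ) = (starRingEnd ℂ) b := by
      rw [hb, ← hsym u v, inner_conj_symm]
    have hquad : ∀ t : ℝ, 0 ≤ (inner ℂ v (X v) : ℂ).re * (t * t)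
        + (2 * ‖b‖) * t + (inner ℂ u (X u) : ℂ).re := by
      intro t
      have h0 := hnn (u + ((t : ℂ) * c) • v)
      have hexp : (inner ℂ (u + ((t:ℂ)*c) • v) (X (u + ((t:ℂ)*c) • v)) : ℂ)
          = inner ℂ u (X u) + ((2 * t * ‖b‖ : ℝ) : ℂ)
            + ((t * t : ℝ) : ℂ) * inner ℂ v (X v) := by
        rw [map_add, map_smul, inner_add_left, inner_add_right, inner_add_right,
          inner_smul_left, inner_smul_right, inner_smul_left, inner_smul_right, hvu, ← hb,
          map_mul, Complex.conj_ofReal]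
        push_cast
        linear_combination ((t:ℂ)) * hcb + ((t:ℂ)) * hcb'
          + ((t:ℂ)*(t:ℂ)*(inner ℂ v (X v):ℂ)) * hcc
      rw [hexp] at h0
      simp only [Complex.add_re, Complex.ofReal_re, Complex.re_ofReal_mul] at h0
      linarith
    have hd := discrim_le_zero hquad
    rw [discrim] at hd
    have habs2 : (0:ℝ) ≤ ‖b‖ := norm_nonneg b
    nlinarith [hd]


set_option maxHeartbeats 1600000 in
lemma valueStep {N k : ℕ}
    {X : EuclideanSpace ℂ (Fin N → Fin k) →L[ℂ] EuclideanSpace ℂ (Fin N → Fin k)}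
    (hpos : X.IsPositive)
    (hXS : X = ((symmSubspace N k).subtypeL.comp
          ((symmSubspace N k).orthogonalProjectionOnto)).comp
        (X.comp ((symmSubspace N k).subtypeL.comp
          ((symmSubspace N k).orthogonalProjectionOnto))))
    {a : Fin N → Fin k → ℂ} {i j : Fin N} (hij : i ≠ j)
    (hxi : ∑ m, ‖a i m‖ ^ 2 = 1) (hxj : ∑ m, ‖a j m‖ ^ 2 = 1)
    (hp : nP (a i) (a j) ≠ 0) (hm : nP (a i) (fun m => -(a j m)) ≠ 0) :
    (inner ℂ (productVec a) (X (productVec a)) : ℂ).re ≤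
      (nP (a i) (a j) / 4) * (inner ℂ
        (productVec (Function.update (Function.update a i (uP (a i) (a j))) j (uP (a i) (a j))))
        (X (productVec (Function.update (Function.update a i (uP (a i) (a j))) j
          (uP (a i) (a j))))) : ℂ).re
      + (nP (a i) (fun m => -(a j m)) / 4) * (inner ℂ
        (productVec (Function.update (Function.update a i (uP (a i) (fun m => -(a j m)))) j
          (uP (a i) (fun m => -(a j m)))))
        (X (productVec (Function.update (Function.update a i (uP (a i) (fun m => -(a j m)))) j
          (uP (a i) (fun m => -(a j m)))))) : ℂ).re := by
  set x := a i with hxdef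
  set y := a j with hydef
  set y' : Fin k → ℂ := fun m => -(y m) with hy'def
  set np := nP x y with hnpdef
  set nm := nP x y' with hnmdef
  have np0 : 0 < np := lt_of_le_of_ne (nP_nonneg x y) (Ne.symm hp)
  have nm0 : 0 < nm := lt_of_le_of_ne (nP_nonneg x y') (Ne.symm hm)
  have hsum4 : np + nm = 4 := nP_add_nP hxi hxj
  set ap := Function.update (Function.update a i (uP x y)) j (uP x y) with hapdef
  set am := Function.update (Function.update a i (uP x y')) j (uP x y') with hamdef
  set φ := productVec a with hφdef
  set φτ := permE (Equiv.swap i j) φ with hφτdef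
  set φp := productVec (Function.update (Function.update a i (fun m => x m + y m)) j
    (fun m => x m + y m)) with hφpdef
  set φm := productVec (Function.update (Function.update a i (fun m => x m + y' m)) j
    (fun m => x m + y' m)) with hφmdef
  have hC1 : φ + φτ = (2⁻¹ : ℂ) • (φp - φm) := by
    ext s
    show (φ + φτ) s = ((2⁻¹ : ℂ) • (φp - φm)) s
    rw [PiLp.add_apply, PiLp.smul_apply, PiLp.sub_apply, smul_eq_mul]
    have hφs : φ s = x (s i) * y (s j) * ∏ l ∈ (Finset.univ.erase i).erase j, a l (s l) := by
      rw [hφdef, productVec_apply, prod_two hij]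
    have hφτs : φτ s = x (s j) * y (s i)
        * ∏ l ∈ (Finset.univ.erase i).erase j, a l (s l) := by
      rw [hφτdef, permE_apply, hφdef, productVec_apply, prod_two hij]
      have e1 : (s ∘ (Equiv.swap i j)) i = s j := by simp
      have e2 : (s ∘ (Equiv.swap i j)) j = s i := by simp
      rw [e1, e2]
      congr 1
      refine Finset.prod_congr rfl fun l hl => ?_
      simp only [Finset.mem_erase] at hl
      have : (s ∘ (Equiv.swap i j)) l = s l := by
        simp [Function.comp, Equiv.swap_apply_of_ne_of_ne hl.2.1 hl.1]
      rw [this]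
    rw [hφs, hφτs, hφpdef, hφmdef, pv_update2 hij, pv_update2 hij]
    simp only [hy'def]
    ring
  have hXφτ : X φτ = X φ := X_permE hXS (Equiv.swap i j) φ
  have hiφτ : ∀ χ, (inner ℂ φτ (X χ) : ℂ) = inner ℂ φ (X χ) :=
    fun χ => inner_permE_X hXS _ φ χ
  have h16 : (inner ℂ (φp - φm) (X (φp - φm)) : ℂ) = 16 * inner ℂ φ (X φ) := by
    have h4 : (inner ℂ (φ + φτ) (X (φ + φτ)) : ℂ) = 4 * inner ℂ φ (X φ) := by
      rw [map_add, inner_add_left, inner_add_right, inner_add_right, hXφτ, hiφτ]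
      ring
    rw [hC1, map_smul, inner_smul_left, inner_smul_right] at h4
    have hconj : (starRingEnd ℂ) (2⁻¹ : ℂ) = 2⁻¹ := by
      rw [show (2⁻¹ : ℂ) = ((2⁻¹ : ℝ) : ℂ) by norm_num, Complex.conj_ofReal]
    rw [hconj] at h4
    linear_combination 4 * h4
  -- scaling relations
  have hkey : ∀ n : ℝ, 0 < n →
      ((n : ℝ) : ℂ) * ((Real.sqrt n : ℝ) : ℂ)⁻¹ * ((Real.sqrt n : ℝ) : ℂ)⁻¹ = 1 := by
    intro n hn
    rw [mul_assoc, ← mul_inv, ← Complex.ofReal_mul, Real.mul_self_sqrt hn.le]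
    exact mul_inv_cancel₀ (Complex.ofReal_ne_zero.mpr (ne_of_gt hn))
  have hscp : φp = ((np : ℝ) : ℂ) • productVec ap := by
    ext s
    show φp s = (((np : ℝ) : ℂ) • productVec ap) s
    rw [PiLp.smul_apply, smul_eq_mul, hφpdef, hapdef, pv_update2 hij, pv_update2 hij]
    have hu : ∀ m, uP x y m = ((Real.sqrt np : ℝ) : ℂ)⁻¹ * (x m + y m) := fun m => rfl
    rw [hu, hu]
    linear_combination (-((x (s i) + y (s i)) * (x (s j) + y (s j))
      * (∏ l ∈ (Finset.univ.erase i).erase j, a l (s l)))) * hkey np np0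
  have hscm : φm = ((nm : ℝ) : ℂ) • productVec am := by
    ext s
    show φm s = (((nm : ℝ) : ℂ) • productVec am) s
    rw [PiLp.smul_apply, smul_eq_mul, hφmdef, hamdef, pv_update2 hij, pv_update2 hij]
    have hu : ∀ m, uP x y' m = ((Real.sqrt nm : ℝ) : ℂ)⁻¹ * (x m + y' m) := fun m => rfl
    rw [hu, hu]
    linear_combination (-((x (s i) + y' (s i)) * (x (s j) + y' (s j))
      * (∏ l ∈ (Finset.univ.erase i).erase j, a l (s l)))) * hkey nm nm0
  set gp := (inner ℂ (productVec ap) (X (productVec ap)) : ℂ).re with hgpdef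
  set gm := (inner ℂ (productVec am) (X (productVec am)) : ℂ).re with hgmdef
  have gp0 : 0 ≤ gp := hpos.re_inner_nonneg_right _
  have gm0 : 0 ≤ gm := hpos.re_inner_nonneg_right _
  have hQp : (inner ℂ φp (X φp) : ℂ).re = np ^ 2 * gp := by
    rw [hscp, map_smul, inner_smul_left, inner_smul_right, Complex.conj_ofReal,
      ← mul_assoc, ← Complex.ofReal_mul, Complex.re_ofReal_mul, hgpdef]
    ring
  have hQm : (inner ℂ φm (X φm) : ℂ).re = nm ^ 2 * gm := by
    rw [hscm, map_smul, inner_smul_left, inner_smul_right, Complex.conj_ofReal,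
      ← mul_assoc, ← Complex.ofReal_mul, Complex.re_ofReal_mul, hgmdef]
    ring
  set z := (inner ℂ φp (X φm) : ℂ) with hzdef
  have hsymX : ∀ w₁ w₂ : EuclideanSpace ℂ (Fin N → Fin k),
      (inner ℂ (X w₁) w₂ : ℂ) = inner ℂ w₁ (X w₂) :=
    hpos.inner_left_eq_inner_right
  have hmz : (inner ℂ φm (X φp) : ℂ) = (starRingEnd ℂ) z := by
    rw [hzdef, ← hsymX φp φm, inner_conj_symm]
  have h16re : 16 * (inner ℂ φ (X φ) : ℂ).re = np ^ 2 * gp + nm ^ 2 * gm - 2 * z.re := by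
    have e := congrArg Complex.re h16
    rw [map_sub, inner_sub_left, inner_sub_right, inner_sub_right, hmz, ← hzdef] at e
    simp only [Complex.sub_re, Complex.conj_re] at e
    rw [hQp, hQm] at e
    have : (16 * (inner ℂ φ (X φ) : ℂ)).re = 16 * (inner ℂ φ (X φ) : ℂ).re := by
      simp [Complex.mul_re]
    rw [this] at e
    linarith [e]
  have hcs : ‖z‖ ^ 2 ≤ (inner ℂ φp (X φp) : ℂ).re * (inner ℂ φm (X φm) : ℂ).re :=
    csPos X hpos φp φm
  rw [hQp, hQm] at hcs
  set B := np * nm * Real.sqrt gp * Real.sqrt gm with hBdef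
  have hBnn : 0 ≤ B := by positivity
  have hB2 : B ^ 2 = np ^ 2 * gp * (nm ^ 2 * gm) := by
    rw [hBdef, mul_pow, mul_pow, mul_pow, Real.sq_sqrt gp0, Real.sq_sqrt gm0]
    ring
  have habsB : ‖z‖ ≤ B := by
    have h2 : ‖z‖ ^ 2 ≤ B ^ 2 := by rw [hB2]; exact hcs
    have h3 := Real.sqrt_le_sqrt h2
    rwa [Real.sqrt_sq (norm_nonneg z), Real.sqrt_sq hBnn] at h3
  have hzre : -B ≤ z.re := by
    have h1 : -|z.re| ≤ z.re := neg_abs_le z.re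
    have h2 : |z.re| ≤ ‖z‖ := Complex.abs_re_le_norm z
    linarith
  have hsq : Real.sqrt gp ^ 2 = gp := Real.sq_sqrt gp0
  have hsq' : Real.sqrt gm ^ 2 = gm := Real.sq_sqrt gm0
  have hkey2 : np ^ 2 * gp + nm ^ 2 * gm + 2 * (np * nm * Real.sqrt gp * Real.sqrt gm)
      ≤ 4 * (np * gp) + 4 * (nm * gm) := by
    set s := Real.sqrt gp with hs
    set r := Real.sqrt gm with hr
    have h3 : np ^ 2 * gp = np ^ 2 * s ^ 2 := by rw [hsq]
    have h4 : nm ^ 2 * gm = nm ^ 2 * r ^ 2 := by rw [hsq']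
    have h5 : np * gp = np * s ^ 2 := by rw [hsq]
    have h6 : nm * gm = nm * r ^ 2 := by rw [hsq']
    have e1 : 0 ≤ np * nm * (s - r) ^ 2 :=
      mul_nonneg (mul_nonneg np0.le nm0.le) (sq_nonneg _)
    have e2 : 4 * (np * s ^ 2) + 4 * (nm * r ^ 2)
        - (np ^ 2 * s ^ 2 + nm ^ 2 * r ^ 2 + 2 * (np * nm * s * r))
        = np * nm * (s - r) ^ 2 := by
      linear_combination (-(np * s ^ 2 + nm * r ^ 2)) * hsum4
    linarith
  have hfinal : 16 * (inner ℂ φ (X φ) : ℂ).re ≤ 16 * (np / 4 * gp + nm / 4 * gm) := by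
    rw [h16re]
    rw [hBdef] at hzre
    linarith
  linarith

lemma sum3 {N : ℕ} {i j : Fin N} (hij : i ≠ j) (g : Fin N → ℝ) :
    ∑ l, g l = g i + g j + ∑ l ∈ (Finset.univ.erase i).erase j, g l := by
  have h2 : ∑ l, g l = g i + ∑ l ∈ Finset.univ.erase i, g l :=
    (Finset.add_sum_erase _ g (Finset.mem_univ i)).symm
  have h1 : ∑ l ∈ Finset.univ.erase i, g l
      = g j + ∑ l ∈ (Finset.univ.erase i).erase j, g l :=
    (Finset.add_sum_erase _ g (by simp [hij.symm])).symm
  rw [h2, h1, add_assoc]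

set_option maxHeartbeats 800000 in
lemma GStep {N k : ℕ} {a : Fin N → Fin k → ℂ} {i j : Fin N} (hij : i ≠ j)
    (hxi : ∑ m, ‖a i m‖ ^ 2 = 1) (hxj : ∑ m, ‖a j m‖ ^ 2 = 1)
    (hp : nP (a i) (a j) ≠ 0) (hm : nP (a i) (fun m => -(a j m)) ≠ 0) :
    (nP (a i) (a j) / 4) * Gpot (Function.update (Function.update a i
        (uP (a i) (a j))) j (uP (a i) (a j)))
      + (nP (a i) (fun m => -(a j m)) / 4) * Gpot (Function.update (Function.update a i
        (uP (a i) (fun m => -(a j m)))) j (uP (a i) (fun m => -(a j m))))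
      = Gpot a + 2 * (1 - Complex.normSq (ipC (a i) (a j))) := by
  set x := a i with hxdef
  set y := a j with hydef
  set y' : Fin k → ℂ := fun m => -(y m) with hy'def
  set np := nP x y with hnpdef
  set nm := nP x y' with hnmdef
  have np0 : 0 < np := lt_of_le_of_ne (nP_nonneg x y) (Ne.symm hp)
  have nm0 : 0 < nm := lt_of_le_of_ne (nP_nonneg x y') (Ne.symm hm)
  have hsum4 : np + nm = 4 := nP_add_nP hxi hxj
  set ee := (Finset.univ.erase i).erase j with heedef
  set W := ∑ l ∈ ee, ∑ l' ∈ ee, Complex.normSq (ipC (a l) (a l')) with hWdef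
  -- general formula for symmetrized configs
  have hGb : ∀ u : Fin k → ℂ, Complex.normSq (ipC u u) = 1 →
      Gpot (Function.update (Function.update a i u) j u)
        = 4 + 4 * (∑ l ∈ ee, Complex.normSq (ipC (a l) u)) + W := by
    intro u hu
    set b := Function.update (Function.update a i u) j u with hbdef
    have hbi : b i = u := by rw [hbdef, Function.update_of_ne hij, Function.update_self]
    have hbj : b j = u := by rw [hbdef, Function.update_self]
    have hbl : ∀ l ∈ ee, b l = a l := by
      intro l hl
      simp only [heedef, Finset.mem_erase] at hl
      exact update2_apply hij a u u hl.2.1 hl.1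
    rw [Gpot, sum3 hij]
    have hrow : ∀ c : Fin N, b c = u →
        ∑ l', Complex.normSq (ipC (b c) (b l'))
          = 2 + ∑ l' ∈ ee, Complex.normSq (ipC (a l') u) := by
      intro c hc
      rw [sum3 hij, hc, hbi, hbj, hu]
      have : ∑ l' ∈ ee, Complex.normSq (ipC u (b l'))
          = ∑ l' ∈ ee, Complex.normSq (ipC (a l') u) := by
        refine Finset.sum_congr rfl fun l' hl' => ?_
        rw [hbl l' hl', normSq_ipC_symm]
      rw [this]
      ring
    have hrowl : ∀ l ∈ ee, ∑ l', Complex.normSq (ipC (b l) (b l'))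
        = 2 * Complex.normSq (ipC (a l) u)
          + ∑ l' ∈ ee, Complex.normSq (ipC (a l) (a l')) := by
      intro l hl
      rw [sum3 hij, hbi, hbj, hbl l hl]
      have : ∑ l' ∈ ee, Complex.normSq (ipC (a l) (b l'))
          = ∑ l' ∈ ee, Complex.normSq (ipC (a l) (a l')) := by
        refine Finset.sum_congr rfl fun l' hl' => ?_
        rw [hbl l' hl']
      rw [this]
      ring
    rw [hrow i hbi, hrow j hbj, Finset.sum_congr rfl hrowl, Finset.sum_add_distrib,
      ← Finset.mul_sum, ← hWdef]
    ring
  have hup : Complex.normSq (ipC (uP x y) (uP x y)) = 1 := by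
    rw [ipC_self (uP_unit hp)]; simp
  have hum : Complex.normSq (ipC (uP x y') (uP x y')) = 1 := by
    rw [ipC_self (uP_unit hm)]; simp
  have hGa : Gpot a = 2 + 2 * Complex.normSq (ipC x y)
      + 2 * (∑ l ∈ ee, (Complex.normSq (ipC (a l) x) + Complex.normSq (ipC (a l) y))) + W := by
    rw [Gpot, sum3 hij]
    have hxx : Complex.normSq (ipC x x) = 1 := by rw [ipC_self hxi]; simp
    have hyy : Complex.normSq (ipC y y) = 1 := by rw [ipC_self hxj]; simp
    have hrowi : ∑ l', Complex.normSq (ipC (a i) (a l'))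
        = 1 + Complex.normSq (ipC x y) + ∑ l' ∈ ee, Complex.normSq (ipC (a l') x) := by
      rw [sum3 hij, ← hxdef, ← hydef, hxx]
      have : ∑ l' ∈ ee, Complex.normSq (ipC x (a l'))
          = ∑ l' ∈ ee, Complex.normSq (ipC (a l') x) :=
        Finset.sum_congr rfl fun l' _ => normSq_ipC_symm _ _
      rw [this]
    have hrowj : ∑ l', Complex.normSq (ipC (a j) (a l'))
        = 1 + Complex.normSq (ipC x y) + ∑ l' ∈ ee, Complex.normSq (ipC (a l') y) := by
      rw [sum3 hij, ← hxdef, ← hydef, hyy, normSq_ipC_symm y x]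
      have : ∑ l' ∈ ee, Complex.normSq (ipC y (a l'))
          = ∑ l' ∈ ee, Complex.normSq (ipC (a l') y) :=
        Finset.sum_congr rfl fun l' _ => normSq_ipC_symm _ _
      rw [this]
      ring
    have hrowl : ∀ l ∈ ee, ∑ l', Complex.normSq (ipC (a l) (a l'))
        = (Complex.normSq (ipC (a l) x) + Complex.normSq (ipC (a l) y))
          + ∑ l' ∈ ee, Complex.normSq (ipC (a l) (a l')) := by
      intro l _
      rw [sum3 hij, ← hxdef, ← hydef]
    rw [hrowi, hrowj, Finset.sum_congr rfl hrowl, Finset.sum_add_distrib, ← hWdef,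
      Finset.sum_add_distrib]
    ring
  have hcombo : ∀ b : Fin k → ℂ,
      (np / 4) * Complex.normSq (ipC b (uP x y)) + (nm / 4) * Complex.normSq (ipC b (uP x y'))
        = (Complex.normSq (ipC b x) + Complex.normSq (ipC b y)) / 2 := by
    intro b
    rw [uP_normSq_ipC hp b, uP_normSq_ipC hm b, ipC_neg_right, ← hnpdef, ← hnmdef]
    have hpar := normSq_parallelogram (ipC b x) (ipC b y)
    have hnp' : np ≠ 0 := ne_of_gt np0
    have hnm' : nm ≠ 0 := ne_of_gt nm0
    rw [show ipC b x + -ipC b y = ipC b x - ipC b y by ring]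
    have e1 : np / 4 * (np⁻¹ * Complex.normSq (ipC b x + ipC b y))
        = Complex.normSq (ipC b x + ipC b y) / 4 := by
      rw [div_mul_eq_mul_div, ← mul_assoc, mul_inv_cancel₀ hnp', one_mul]
    have e2 : nm / 4 * (nm⁻¹ * Complex.normSq (ipC b x - ipC b y))
        = Complex.normSq (ipC b x - ipC b y) / 4 := by
      rw [div_mul_eq_mul_div, ← mul_assoc, mul_inv_cancel₀ hnm', one_mul]
    rw [e1, e2]
    linear_combination hpar / 4
  have hS : (np / 4) * (∑ l ∈ ee, Complex.normSq (ipC (a l) (uP x y)))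
      + (nm / 4) * (∑ l ∈ ee, Complex.normSq (ipC (a l) (uP x y')))
      = (∑ l ∈ ee, (Complex.normSq (ipC (a l) x) + Complex.normSq (ipC (a l) y))) / 2 := by
    rw [Finset.mul_sum, Finset.mul_sum, ← Finset.sum_add_distrib, Finset.sum_div]
    exact Finset.sum_congr rfl fun l _ => hcombo (a l)
  rw [hGb (uP x y) hup, hGb (uP x y') hum, hGa]
  linear_combination (1 + W / 4) * hsum4 + 4 * hS

lemma continuous_pv {N k : ℕ} : Continuous fun a : Fin N → Fin k → ℂ => productVec a := by
  have h : Continuous fun a : Fin N → Fin k → ℂ => (fun s : Fin N → Fin k => ∏ i, a i (s i)) := by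
    refine continuous_pi fun s => ?_
    exact continuous_finset_prod _ fun l _ => (continuous_apply (s l)).comp (continuous_apply l)
  exact (PiLp.continuous_toLp (p := 2) (β := fun _ : Fin N → Fin k => ℂ)).comp h

lemma continuous_fval {N k : ℕ}
    (X : EuclideanSpace ℂ (Fin N → Fin k) →L[ℂ] EuclideanSpace ℂ (Fin N → Fin k)) :
    Continuous fun a : Fin N → Fin k → ℂ =>
      (inner ℂ (productVec a) (X (productVec a)) : ℂ).re := by
  apply Complex.continuous_re.comp
  exact Continuous.inner continuous_pv (X.continuous.comp continuous_pv)

lemma continuous_Gpot {N k : ℕ} : Continuous fun a : Fin N → Fin k → ℂ => Gpot a := by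
  refine continuous_finset_sum _ fun i _ => continuous_finset_sum _ fun j _ => ?_
  apply Complex.continuous_normSq.comp
  refine continuous_finset_sum _ fun m _ => Continuous.mul ?_ ?_
  · exact Complex.continuous_conj.comp ((continuous_apply m).comp (continuous_apply i))
  · exact (continuous_apply m).comp (continuous_apply j)

lemma isCompact_unitCfg {N k : ℕ} :
    IsCompact {a : Fin N → Fin k → ℂ | ∀ i, ∑ m, ‖a i m‖ ^ 2 = 1} := by
  rw [Metric.isCompact_iff_isClosed_bounded]
  constructor
  · have : {a : Fin N → Fin k → ℂ | ∀ i, ∑ m, ‖a i m‖ ^ 2 = 1}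
        = ⋂ i, {a : Fin N → Fin k → ℂ | ∑ m, ‖a i m‖ ^ 2 = 1} := by
      ext a; simp [Set.mem_iInter]
    rw [this]
    refine isClosed_iInter fun i => isClosed_eq ?_ continuous_const
    refine continuous_finset_sum _ fun m _ => ?_
    exact (continuous_norm.comp
      ((continuous_apply m).comp (continuous_apply i))).pow 2
  · rw [isBounded_iff_forall_norm_le]
    refine ⟨1, fun a ha => ?_⟩
    rw [pi_norm_le_iff_of_nonneg zero_le_one]
    intro i
    rw [pi_norm_le_iff_of_nonneg zero_le_one]
    intro m
    have h1 : ‖a i m‖ ^ 2 ≤ 1 := by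
      have := ha i
      have hle : ‖a i m‖ ^ 2 ≤ ∑ m', ‖a i m'‖ ^ 2 :=
        Finset.single_le_sum (f := fun m' => ‖a i m'‖ ^ 2)
          (fun m' _ => sq_nonneg _) (Finset.mem_univ m)
      linarith
    have : ‖a i m‖ ≤ 1 := by nlinarith [norm_nonneg (a i m)]
    simpa using this

lemma updMem {N k : ℕ} {a : Fin N → Fin k → ℂ} (ha : ∀ i, ∑ m, ‖a i m‖ ^ 2 = 1)
    {i j : Fin N} {u : Fin k → ℂ} (hu : ∑ m, ‖u m‖ ^ 2 = 1) :
    ∀ i', ∑ m, ‖(Function.update (Function.update a i u) j u) i' m‖ ^ 2 = 1 := by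
  intro i'
  rcases eq_or_ne i' j with rfl | h1
  · rw [show Function.update (Function.update a i u) i' u i' = u from Function.update_self _ _ _]
    exact hu
  · rw [Function.update_of_ne h1]
    rcases eq_or_ne i' i with rfl | h2
    · rw [Function.update_self]; exact hu
    · rw [Function.update_of_ne h2]; exact ha i'

lemma nP_eq_zero_normSq {k : ℕ} {x y : Fin k → ℂ}
    (hx : ∑ m, ‖x m‖ ^ 2 = 1) (h : nP x y = 0) :
    Complex.normSq (ipC x y) = 1 := by
  have h0 : ∀ m ∈ Finset.univ, ‖x m + y m‖ ^ 2 = 0 := by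
    intro m hm
    have := (Finset.sum_eq_zero_iff_of_nonneg (fun m _ => sq_nonneg _)).mp h m hm
    exact this
  have hym : ∀ m, y m = -(x m) := by
    intro m
    have := h0 m (Finset.mem_univ m)
    have h2 : ‖x m + y m‖ = 0 := by nlinarith [norm_nonneg (x m + y m)]
    have h3 : x m + y m = 0 := by simpa using h2
    linear_combination h3
  have : ipC x y = -1 := by
    have e : ipC x y = - ipC x x := by
      rw [ipC, ipC, ← Finset.sum_neg_distrib]
      exact Finset.sum_congr rfl fun m _ => by rw [hym m]; ring
    rw [e, ipC_self hx]
  rw [this]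
  simp

lemma nP_neg_eq_zero_normSq {k : ℕ} {x y : Fin k → ℂ}
    (hx : ∑ m, ‖x m‖ ^ 2 = 1) (h : nP x (fun m => -(y m)) = 0) :
    Complex.normSq (ipC x y) = 1 := by
  have h1 : Complex.normSq (ipC x (fun m => -(y m))) = 1 := nP_eq_zero_normSq hx h
  rw [ipC_neg_right] at h1
  rwa [Complex.normSq_neg] at h1

lemma ipC_inner {k : ℕ} (b c : Fin k → ℂ) :
    (inner ℂ ((WithLp.equiv 2 (Fin k → ℂ)).symm b) ((WithLp.equiv 2 (Fin k → ℂ)).symm c) : ℂ)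
      = ipC b c := by
  simp [PiLp.inner_apply, RCLike.inner_apply, ipC, mul_comm]

lemma euc_norm_one {k : ℕ} {b : Fin k → ℂ} (hb : ∑ m, ‖b m‖ ^ 2 = 1) :
    ‖(WithLp.equiv 2 (Fin k → ℂ)).symm b‖ = 1 := by
  rw [EuclideanSpace.norm_eq]
  have : ∀ m, ‖(WithLp.equiv 2 (Fin k → ℂ)).symm b m‖ ^ 2 = ‖b m‖ ^ 2 :=
    fun m => by rfl
  rw [Finset.sum_congr rfl fun m _ => this m, hb, Real.sqrt_one]

lemma normSq_ipC_le_one {k : ℕ} {b c : Fin k → ℂ}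
    (hb : ∑ m, ‖b m‖ ^ 2 = 1) (hc : ∑ m, ‖c m‖ ^ 2 = 1) :
    Complex.normSq (ipC b c) ≤ 1 := by
  have h := norm_inner_le_norm (𝕜 := ℂ)
    ((WithLp.equiv 2 (Fin k → ℂ)).symm b) ((WithLp.equiv 2 (Fin k → ℂ)).symm c)
  rw [ipC_inner, euc_norm_one hb, euc_norm_one hc] at h
  have h2 : ‖ipC b c‖ ≤ 1 := by simpa using h
  rw [← Complex.sq_norm]
  nlinarith [norm_nonneg (ipC b c)]

lemma parallel_of_normSq_ipC {k : ℕ} {b c : Fin k → ℂ}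
    (hb : ∑ m, ‖b m‖ ^ 2 = 1) (hc : ∑ m, ‖c m‖ ^ 2 = 1)
    (h : Complex.normSq (ipC b c) = 1) :
    ∃ r : ℂ, ‖r‖ = 1 ∧ c = fun m => r * b m := by
  set vb := (WithLp.equiv 2 (Fin k → ℂ)).symm b with hvb
  set vc := (WithLp.equiv 2 (Fin k → ℂ)).symm c with hvc
  have hnb : ‖vb‖ = 1 := euc_norm_one hb
  have hnc : ‖vc‖ = 1 := euc_norm_one hc
  have hb0 : vb ≠ 0 := by intro h0; rw [h0] at hnb; simp at hnb
  have hc0 : vc ≠ 0 := by intro h0; rw [h0] at hnc; simp at hnc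
  have habs : ‖(inner ℂ vb vc : ℂ)‖ = ‖vb‖ * ‖vc‖ := by
    rw [hnb, hnc, ipC_inner]
    have : ‖ipC b c‖ = 1 := by
      rw [← Real.sqrt_one, ← h, Complex.norm_def]
    simpa using this
  obtain ⟨r, hr0, hrc⟩ := (norm_inner_eq_norm_iff (𝕜 := ℂ) hb0 hc0).mp habs
  refine ⟨r, ?_, ?_⟩
  · have : ‖vc‖ = ‖r‖ * ‖vb‖ := by rw [hrc, norm_smul]
    rw [hnb, hnc] at this
    simpa using this.symm
  · funext m
    have : vc m = (r • vb) m := by rw [hrc]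
    rw [PiLp.smul_apply, smul_eq_mul] at this
    exact this


set_option maxHeartbeats 1600000 in
/-- For a positive semidefinite operator X on (ℂ^k)^⊗N with X = Π_S X Π_S
(Π_S the projector onto the symmetric subspace) and N ≥ 3, the maximum of
⟨φ|X|φ⟩ over product states equals the maximum over symmetric product states. -/
theorem stmt_16 (N k : ℕ) (hN : 3 ≤ N) (hk : 0 < k)
    (X : EuclideanSpace ℂ (Fin N → Fin k) →L[ℂ] EuclideanSpace ℂ (Fin N → Fin k))
    (hpos : X.IsPositive)
    (hXS : X = ((symmSubspace N k).subtypeL.comp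
          (symmSubspace N k).orthogonalProjectionOnto).comp
        (X.comp ((symmSubspace N k).subtypeL.comp
          (symmSubspace N k).orthogonalProjectionOnto))) :
    ∃ M : ℝ,
      IsGreatest {x : ℝ | ∃ a : Fin N → Fin k → ℂ,
        (∀ i, ∑ j, ‖a i j‖ ^ 2 = 1) ∧
        x = (inner ℂ (productVec a) (X (productVec a)) : ℂ).re} M ∧
      IsGreatest {x : ℝ | ∃ b : Fin k → ℂ,
        (∑ j, ‖b j‖ ^ 2 = 1) ∧
        x = (inner ℂ (productVec fun _ => b) (X (productVec fun _ => b)) : ℂ).re} M := by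
  classical
  set A := {a : Fin N → Fin k → ℂ | ∀ i, ∑ m, ‖a i m‖ ^ 2 = 1} with hAdef
  set f := fun a : Fin N → Fin k → ℂ =>
    (inner ℂ (productVec a) (X (productVec a)) : ℂ).re with hfdef
  have hAne : A.Nonempty := by
    refine ⟨fun _ m => if m = ⟨0, hk⟩ then 1 else 0, fun i => ?_⟩
    have h1 : ∀ m : Fin k, ‖if m = ⟨0, hk⟩ then (1 : ℂ) else 0‖ ^ 2
        = if m = ⟨0, hk⟩ then (1 : ℝ) else 0 := by
      intro m; split <;> simp
    rw [Finset.sum_congr rfl fun m _ => h1 m]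
    simp
  obtain ⟨astar, hastarA, hmax⟩ :=
    isCompact_unitCfg.exists_isMaxOn hAne (continuous_fval X).continuousOn
  set M := f astar with hMdef
  have hub : ∀ a ∈ A, f a ≤ M := fun a ha => hmax ha
  set K := A ∩ f ⁻¹' {M} with hKdef
  have hKcomp : IsCompact K :=
    isCompact_unitCfg.inter_right (isClosed_singleton.preimage (continuous_fval X))
  have hKne : K.Nonempty := ⟨astar, hastarA, rfl⟩
  obtain ⟨p, hpK, hGmax⟩ := hKcomp.exists_isMaxOn hKne continuous_Gpot.continuousOn
  have hpA : p ∈ A := hpK.1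
  have hpM : f p = M := hpK.2
  -- all pairwise overlaps are 1 at p
  have hover : ∀ i j : Fin N, i ≠ j → Complex.normSq (ipC (p i) (p j)) = 1 := by
    intro i j hij
    by_contra hne
    have hp0 : nP (p i) (p j) ≠ 0 := fun h => hne (nP_eq_zero_normSq (hpA i) h)
    have hm0 : nP (p i) (fun m => -(p j m)) ≠ 0 := fun h =>
      hne (nP_neg_eq_zero_normSq (hpA i) h)
    set np := nP (p i) (p j) with hnpdef
    set nm := nP (p i) (fun m => -(p j m)) with hnmdef
    have np0 : 0 < np := lt_of_le_of_ne (nP_nonneg _ _) (Ne.symm hp0)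
    have nm0 : 0 < nm := lt_of_le_of_ne (nP_nonneg _ _) (Ne.symm hm0)
    set ap := Function.update (Function.update p i (uP (p i) (p j))) j
      (uP (p i) (p j)) with hapdef
    set am := Function.update (Function.update p i (uP (p i) (fun m => -(p j m)))) j
      (uP (p i) (fun m => -(p j m))) with hamdef
    have hapA : ap ∈ A := updMem hpA (uP_unit hp0)
    have hamA : am ∈ A := updMem hpA (uP_unit hm0)
    have hval := valueStep hpos hXS hij (hpA i) (hpA j) hp0 hm0
    have h1 : f ap ≤ M := hub _ hapA
    have h2 : f am ≤ M := hub _ hamA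
    have hsum4 : np + nm = 4 := nP_add_nP (hpA i) (hpA j)
    have hvalM : M ≤ (np / 4) * f ap + (nm / 4) * f am := by
      rw [← hpM]; exact hval
    have e3 : np * (M - f ap) + nm * (M - f am)
        = 4 * (M - ((np / 4) * f ap + (nm / 4) * f am)) := by
      linear_combination M * hsum4
    have e1 : 0 ≤ np * (M - f ap) := mul_nonneg np0.le (by linarith)
    have e2 : 0 ≤ nm * (M - f am) := mul_nonneg nm0.le (by linarith)
    have e4 : np * (M - f ap) = 0 := by linarith
    have e5 : nm * (M - f am) = 0 := by linarith
    have hfap : f ap = M := by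
      rcases mul_eq_zero.mp e4 with h | h
      · exact absurd h (ne_of_gt np0)
      · linarith
    have hfam : f am = M := by
      rcases mul_eq_zero.mp e5 with h | h
      · exact absurd h (ne_of_gt nm0)
      · linarith
    have hapK : ap ∈ K := ⟨hapA, hfap⟩
    have hamK : am ∈ K := ⟨hamA, hfam⟩
    have hGap : Gpot ap ≤ Gpot p := hGmax hapK
    have hGam : Gpot am ≤ Gpot p := hGmax hamK
    have hGstep := GStep hij (hpA i) (hpA j) hp0 hm0
    have hlt : Complex.normSq (ipC (p i) (p j)) < 1 :=
      lt_of_le_of_ne (normSq_ipC_le_one (hpA i) (hpA j)) hne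
    have e6 : np * Gpot p + nm * Gpot p = 4 * Gpot p := by
      linear_combination (Gpot p) * hsum4
    have e7 : np * Gpot ap ≤ np * Gpot p := mul_le_mul_of_nonneg_left hGap np0.le
    have e8 : nm * Gpot am ≤ nm * Gpot p := mul_le_mul_of_nonneg_left hGam nm0.le
    have e9 : np * Gpot ap + nm * Gpot am
        = 4 * (Gpot p + 2 * (1 - Complex.normSq (ipC (p i) (p j)))) := by
      linear_combination 4 * hGstep
    linarith
  -- all rows of p are parallel
  have hNpos : (0 : ℕ) < N := by omega
  set i0 : Fin N := ⟨0, hNpos⟩ with hi0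
  have hr : ∀ l : Fin N, ∃ r : ℂ, ‖r‖ = 1 ∧ p l = fun m => r * p i0 m := by
    intro l
    rcases eq_or_ne l i0 with rfl | hl
    · exact ⟨1, by simp, by funext m; simp⟩
    · exact parallel_of_normSq_ipC (hpA i0) (hpA l) (hover i0 l (Ne.symm hl))
  choose r hr1 hr2 using hr
  have hpv : productVec p = (∏ l, r l) • productVec (fun _ => p i0) := by
    ext s
    show productVec p s = ((∏ l, r l) • productVec (fun _ => p i0)) s
    rw [PiLp.smul_apply, smul_eq_mul, productVec_apply, productVec_apply,
      ← Finset.prod_mul_distrib]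
    exact Finset.prod_congr rfl fun l _ => by rw [hr2 l]
  have hcc : (starRingEnd ℂ) (∏ l, r l) * (∏ l, r l) = 1 := by
    rw [mul_comm, Complex.mul_conj, Complex.normSq_eq_norm_sq, norm_prod]
    rw [Finset.prod_congr rfl fun l _ => hr1 l, Finset.prod_const_one]
    norm_num
  have hfsym : f p = f (fun _ => p i0) := by
    rw [hfdef]
    simp only
    rw [hpv, map_smul, inner_smul_left, inner_smul_right, ← mul_assoc, hcc, one_mul]
  refine ⟨M, ⟨⟨p, hpA, hpM.symm⟩, ?_⟩, ⟨⟨p i0, hpA i0, ?_⟩, ?_⟩⟩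
  · rintro x ⟨a, ha, rfl⟩
    exact hub a ha
  · rw [← hpM, hfsym]
  · rintro x ⟨b, hb, rfl⟩
    exact hub (fun _ => b) (fun _ => hb)
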